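/- Let k be a field of characteristic zero, (A, ∗, ϖ) a quasi-Frobenius Zinbiel algebra, (B, ⋄, ω) a quadratic perm algebra, and (A ⊗ B, ·) the induced commutative associative algebra. Define the bilinear form 𝔅 on A ⊗ B by 𝔅(a₁ ⊗ b₁, a₂ ⊗ b₂) = ϖ(a₁, a₂)·ω(b₁, b₂). Then 𝔅 is an antisymmetric nondegenerate bilinear form satisfying the Connes cocycle condition 𝔅(u₁·u₂, u₃) + 𝔅(u₂·u₃, u₁) + 𝔅(u₃·u₁, u₂) = 0 for all u₁, u₂, u₃ ∈ A ⊗ B. -/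
import Mathlib


open TensorProduct

noncomputable section

def IsZinbiel {k A : Type} [Field k] [AddCommGroup A] [Module k A]
    (ast : A →ₗ[k] A →ₗ[k] A) : Prop :=
  ∀ a₁ a₂ a₃ : A, ast a₁ (ast a₂ a₃) = ast (ast a₁ a₂) a₃ + ast (ast a₂ a₁) a₃

def IsPreLie {k A : Type} [Field k] [AddCommGroup A] [Module k A]
    (circ : A →ₗ[k] A →ₗ[k] A) : Prop :=
  ∀ a₁ a₂ a₃ : A,
    circ (circ a₁ a₂) a₃ - circ a₁ (circ a₂ a₃)
      = circ (circ a₂ a₁) a₃ - circ a₂ (circ a₁ a₃)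

def IsPerm {k B : Type} [Field k] [AddCommGroup B] [Module k B]
    (dia : B →ₗ[k] B →ₗ[k] B) : Prop :=
  ∀ b₁ b₂ b₃ : B,
    dia b₁ (dia b₂ b₃) = dia (dia b₁ b₂) b₃ ∧
    dia (dia b₁ b₂) b₃ = dia (dia b₂ b₁) b₃

def IsPrePoisson {k A : Type} [Field k] [AddCommGroup A] [Module k A]
    (ast circ : A →ₗ[k] A →ₗ[k] A) : Prop :=
  IsZinbiel ast ∧ IsPreLie circ ∧
  (∀ a₁ a₂ a₃ : A,
    ast (circ a₁ a₂ - circ a₂ a₁) a₃ = circ a₁ (ast a₂ a₃) - ast a₂ (circ a₁ a₃)) ∧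
  (∀ a₁ a₂ a₃ : A,
    circ (ast a₁ a₂ + ast a₂ a₁) a₃ = ast a₁ (circ a₂ a₃) + ast a₂ (circ a₁ a₃))

def IsPoisson {k P : Type} [Field k] [AddCommGroup P] [Module k P]
    (mul br : P →ₗ[k] P →ₗ[k] P) : Prop :=
  (∀ u v : P, mul u v = mul v u) ∧
  (∀ u v w : P, mul (mul u v) w = mul u (mul v w)) ∧
  (∀ u v : P, br u v = - br v u) ∧
  (∀ u v w : P, br (br u v) w + br (br v w) u + br (br w u) v = 0) ∧
  (∀ u v w : P, br u (mul v w) = mul (br u v) w + mul v (br u w))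

def idm (k M : Type) [Field k] [AddCommGroup M] [Module k M] : M →ₗ[k] M :=
  LinearMap.id

def tau (k M : Type) [Field k] [AddCommGroup M] [Module k M] :
    M ⊗[k] M →ₗ[k] M ⊗[k] M :=
  (TensorProduct.comm k M M).toLinearMap

def unassoc (k M : Type) [Field k] [AddCommGroup M] [Module k M] :
    M ⊗[k] (M ⊗[k] M) →ₗ[k] (M ⊗[k] M) ⊗[k] M :=
  (TensorProduct.assoc k M M M).symm.toLinearMap

def intch (k A B : Type) [Field k] [AddCommGroup A] [Module k A]
    [AddCommGroup B] [Module k B] :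
    (A ⊗[k] A) ⊗[k] (B ⊗[k] B) →ₗ[k] (A ⊗[k] B) ⊗[k] (A ⊗[k] B) :=
  (TensorProduct.tensorTensorTensorComm k A A B B).toLinearMap

def IsZinbielCo {k A : Type} [Field k] [AddCommGroup A] [Module k A]
    (ϑ : A →ₗ[k] A ⊗[k] A) : Prop :=
  ∀ a : A,
    TensorProduct.map ϑ (idm k A) (ϑ a)
      + TensorProduct.map (tau k A) (idm k A) (TensorProduct.map ϑ (idm k A) (ϑ a))
    = unassoc k A (TensorProduct.map (idm k A) ϑ (ϑ a))

def IsPermCo {k B : Type} [Field k] [AddCommGroup B] [Module k B]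
    (ν : B →ₗ[k] B ⊗[k] B) : Prop :=
  ∀ b : B,
    TensorProduct.map ν (idm k B) (ν b)
      = unassoc k B (TensorProduct.map (idm k B) ν (ν b)) ∧
    TensorProduct.map ν (idm k B) (ν b)
      = TensorProduct.map (tau k B) (idm k B) (TensorProduct.map ν (idm k B) (ν b))

def IsPreLieCo {k A : Type} [Field k] [AddCommGroup A] [Module k A]
    (θ : A →ₗ[k] A ⊗[k] A) : Prop :=
  ∀ a : A,
    unassoc k A (TensorProduct.map (idm k A) θ (θ a))
      - TensorProduct.map (tau k A) (idm k A)
          (unassoc k A (TensorProduct.map (idm k A) θ (θ a)))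
    = TensorProduct.map θ (idm k A) (θ a)
      - TensorProduct.map (tau k A) (idm k A) (TensorProduct.map θ (idm k A) (θ a))

def Zexp {k A : Type} [Field k] [AddCommGroup A] [Module k A]
    (ast : A →ₗ[k] A →ₗ[k] A) {p : ℕ} (x y : Fin p → A) : (A ⊗[k] A) ⊗[k] A :=
  ∑ i : Fin p, ∑ j : Fin p,
    (((ast (x i) (x j)) ⊗ₜ[k] (y j)) ⊗ₜ[k] (y i)
      + ((y j) ⊗ₜ[k] (ast (x i) (x j))) ⊗ₜ[k] (y i)
      + ((x i) ⊗ₜ[k] (x j)) ⊗ₜ[k] (ast (y i) (y j))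
      + ((x j) ⊗ₜ[k] (x i)) ⊗ₜ[k] (ast (y i) (y j))
      - ((x i) ⊗ₜ[k] (ast (y i) (x j))) ⊗ₜ[k] (y j)
      - ((x j) ⊗ₜ[k] (ast (x i) (y j))) ⊗ₜ[k] (y i)
      - ((ast (x i) (y j)) ⊗ₜ[k] (x j)) ⊗ₜ[k] (y i)
      - ((ast (y i) (x j)) ⊗ₜ[k] (x i)) ⊗ₜ[k] (y j))

def PLexp {k A : Type} [Field k] [AddCommGroup A] [Module k A]
    (circ : A →ₗ[k] A →ₗ[k] A) {p : ℕ} (x y : Fin p → A) : (A ⊗[k] A) ⊗[k] A :=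
  ∑ i : Fin p, ∑ j : Fin p,
    (((circ (x i) (x j)) ⊗ₜ[k] (y j)) ⊗ₜ[k] (y i)
      + ((x j) ⊗ₜ[k] (circ (x i) (y j))) ⊗ₜ[k] (y i)
      + ((circ (y i) (x j)) ⊗ₜ[k] (x i)) ⊗ₜ[k] (y j)
      + ((x j) ⊗ₜ[k] (x i)) ⊗ₜ[k] (circ (y i) (y j))
      - ((y j) ⊗ₜ[k] (circ (x i) (x j))) ⊗ₜ[k] (y i)
      - ((x i) ⊗ₜ[k] (circ (y i) (x j))) ⊗ₜ[k] (y j)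
      - ((circ (x i) (y j)) ⊗ₜ[k] (x j)) ⊗ₜ[k] (y i)
      - ((x i) ⊗ₜ[k] (x j)) ⊗ₜ[k] (circ (y i) (y j)))

def AYexp {k P : Type} [Field k] [AddCommGroup P] [Module k P]
    (m : P →ₗ[k] P →ₗ[k] P) {ι : Type} [Fintype ι] (u v : ι → P) :
    (P ⊗[k] P) ⊗[k] P :=
  ∑ α : ι, ∑ β : ι,
    (((m (u α) (u β)) ⊗ₜ[k] (v α)) ⊗ₜ[k] (v β)
      + ((u α) ⊗ₜ[k] (m (v α) (u β))) ⊗ₜ[k] (v β)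
      - ((u β) ⊗ₜ[k] (u α)) ⊗ₜ[k] (m (v α) (v β)))

def CYexp {k P : Type} [Field k] [AddCommGroup P] [Module k P]
    (br : P →ₗ[k] P →ₗ[k] P) {ι : Type} [Fintype ι] (u v : ι → P) :
    (P ⊗[k] P) ⊗[k] P :=
  ∑ α : ι, ∑ β : ι,
    (((br (u α) (u β)) ⊗ₜ[k] (v α)) ⊗ₜ[k] (v β)
      + ((u α) ⊗ₜ[k] (u β)) ⊗ₜ[k] (br (v α) (v β))
      + ((u α) ⊗ₜ[k] (br (v α) (u β))) ⊗ₜ[k] (v β))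

def sharp (k : Type) [Field k] {V : Type} [AddCommGroup V] [Module k V]
    (s : V ⊗[k] V) (ξ : V →ₗ[k] k) : V :=
  TensorProduct.lid k V (LinearMap.rTensor V ξ s)

abbrev PermB (k : Type) [Field k] : Type := ((ℤ × ℤ) × Fin 2) →₀ k

def bB (k : Type) [Field k] (i₁ i₂ : ℤ) (s : Fin 2) : PermB k :=
  Finsupp.single ((i₁, i₂), s) 1

theorem statement14 (k A B : Type) [Field k] [CharZero k]
    [AddCommGroup A] [Module k A] [FiniteDimensional k A]
    [AddCommGroup B] [Module k B] [FiniteDimensional k B]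
    (ast : A →ₗ[k] A →ₗ[k] A) (hast : IsZinbiel ast)
    (ϖ : A →ₗ[k] A →ₗ[k] k)
    (hϖsym : ∀ a₁ a₂ : A, ϖ a₁ a₂ = ϖ a₂ a₁)
    (hϖnd : ∀ a : A, (∀ a' : A, ϖ a a' = 0) → a = 0)
    (hϖcoc : ∀ a₁ a₂ a₃ : A,
      ϖ (ast a₁ a₂ + ast a₂ a₁) a₃ = ϖ a₁ (ast a₂ a₃) + ϖ a₂ (ast a₁ a₃))
    (dia : B →ₗ[k] B →ₗ[k] B) (hdia : IsPerm dia)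
    (ω : B →ₗ[k] B →ₗ[k] k)
    (hω₁ : ∀ b₁ b₂ : B, ω b₁ b₂ = - ω b₂ b₁)
    (hω₂ : ∀ b₁ : B, (∀ b₂ : B, ω b₁ b₂ = 0) → b₁ = 0)
    (hω₃ : ∀ b₁ b₂ b₃ : B, ω (dia b₁ b₂) b₃ = ω b₁ (dia b₂ b₃ - dia b₃ b₂))
    (m : A ⊗[k] B →ₗ[k] A ⊗[k] B →ₗ[k] A ⊗[k] B)
    (hm : ∀ (a₁ a₂ : A) (b₁ b₂ : B),
      m (a₁ ⊗ₜ[k] b₁) (a₂ ⊗ₜ[k] b₂)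
        = (ast a₁ a₂) ⊗ₜ[k] (dia b₁ b₂) + (ast a₂ a₁) ⊗ₜ[k] (dia b₂ b₁))
    (Bf : A ⊗[k] B →ₗ[k] A ⊗[k] B →ₗ[k] k)
    (hBf : ∀ (a₁ a₂ : A) (b₁ b₂ : B),
      Bf (a₁ ⊗ₜ[k] b₁) (a₂ ⊗ₜ[k] b₂) = ϖ a₁ a₂ * ω b₁ b₂)
    :
    (∀ u v : A ⊗[k] B, Bf u v = - Bf v u) ∧
    (∀ u : A ⊗[k] B, (∀ v : A ⊗[k] B, Bf u v = 0) → u = 0) ∧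
    (∀ u₁ u₂ u₃ : A ⊗[k] B,
      Bf (m u₁ u₂) u₃ + Bf (m u₂ u₃) u₁ + Bf (m u₃ u₁) u₂ = 0) := by
  -- key pointwise lemma identifying Bf with the tensor of the two flat maps
  have hconj : Function.Injective ϖ := by
    rw [injective_iff_map_eq_zero]
    intro a ha
    exact hϖnd a fun a' => by rw [ha]; rfl
  have hconjω : Function.Injective ω := by
    rw [injective_iff_map_eq_zero]
    intro b hb
    exact hω₂ b fun b' => by rw [hb]; rfl
  have hsurjϖ : Function.Surjective ϖ :=
    (LinearMap.injective_iff_surjective_of_finrank_eq_finrank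
      Subspace.dual_finrank_eq.symm).mp hconj
  have hsurjω : Function.Surjective ω :=
    (LinearMap.injective_iff_surjective_of_finrank_eq_finrank
      Subspace.dual_finrank_eq.symm).mp hconjω
  let e₁ : A ≃ₗ[k] Module.Dual k A := LinearEquiv.ofBijective ϖ ⟨hconj, hsurjϖ⟩
  let e₂ : B ≃ₗ[k] Module.Dual k B := LinearEquiv.ofBijective ω ⟨hconjω, hsurjω⟩
  let E : A ⊗[k] B ≃ₗ[k] Module.Dual k A ⊗[k] Module.Dual k B :=
    TensorProduct.congr e₁ e₂
  let DD : Module.Dual k A ⊗[k] Module.Dual k B ≃ₗ[k] Module.Dual k (A ⊗[k] B) :=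
    TensorProduct.dualDistribEquiv k A B
  have hkey : ∀ u v : A ⊗[k] B, (DD (E u)) v = Bf u v := by
    intro u v
    induction u using TensorProduct.induction_on with
    | zero => simp
    | tmul a b =>
      induction v using TensorProduct.induction_on with
      | zero => simp
      | tmul a' b' =>
        rw [hBf]
        show (DD (TensorProduct.congr e₁ e₂ (a ⊗ₜ[k] b))) (a' ⊗ₜ[k] b') = _
        rw [TensorProduct.congr_tmul]
        show (TensorProduct.dualDistribEquiv k A B (e₁ a ⊗ₜ[k] e₂ b)) (a' ⊗ₜ[k] b') = _
        rw [TensorProduct.dualDistribEquiv]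
        rw [TensorProduct.dualDistribEquivOfBasis_apply_apply]
        rfl
      | add x y hx hy => rw [map_add, hx, hy, map_add]
    | add x y hx hy =>
      rw [map_add, map_add, LinearMap.add_apply, hx, hy, map_add, LinearMap.add_apply]
  refine ⟨?_, ?_, ?_⟩
  · -- antisymmetry
    intro u v
    induction u using TensorProduct.induction_on with
    | zero => simp
    | tmul a b =>
      induction v using TensorProduct.induction_on with
      | zero => simp
      | tmul a' b' =>
        rw [hBf, hBf, hϖsym a a', hω₁ b b']
        ring
      | add x y hx hy =>
        simp only [map_add, LinearMap.add_apply, hx, hy]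
        ring
    | add x y hx hy =>
      simp only [map_add, LinearMap.add_apply, hx, hy]
      ring
  · -- nondegeneracy
    intro u hu
    have h0 : DD (E u) = 0 := by
      apply LinearMap.ext
      intro v
      rw [hkey u v, hu v]
      rfl
    have h1 : E u = 0 := by
      have := DD.injective (by rw [h0, map_zero] : DD (E u) = DD 0)
      exact this
    exact E.injective (by rw [h1, map_zero] : E u = E 0)
  · -- Connes cocycle
    intro u₁ u₂ u₃
    induction u₁ using TensorProduct.induction_on with
    | zero => simp
    | add x y hx hy =>
      simp only [map_add, LinearMap.add_apply]
      linear_combination hx + hy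
    | tmul a₁ b₁ =>
    induction u₂ using TensorProduct.induction_on with
    | zero => simp
    | add x y hx hy =>
      simp only [map_add, LinearMap.add_apply]
      linear_combination hx + hy
    | tmul a₂ b₂ =>
    induction u₃ using TensorProduct.induction_on with
    | zero => simp
    | add x y hx hy =>
      simp only [map_add, LinearMap.add_apply]
      linear_combination hx + hy
    | tmul a₃ b₃ =>
      rw [hm a₁ a₂ b₁ b₂, hm a₂ a₃ b₂ b₃, hm a₃ a₁ b₃ b₁,
        map_add, map_add, map_add, LinearMap.add_apply, LinearMap.add_apply,
        LinearMap.add_apply, hBf, hBf, hBf, hBf, hBf, hBf]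
      -- scalar certificate
      have hA123 : ϖ (ast a₁ a₂) a₃ + ϖ (ast a₂ a₁) a₃
          = ϖ a₁ (ast a₂ a₃) + ϖ a₂ (ast a₁ a₃) := by
        have h := hϖcoc a₁ a₂ a₃
        rwa [map_add, LinearMap.add_apply] at h
      have hA132 : ϖ (ast a₁ a₃) a₂ + ϖ (ast a₃ a₁) a₂
          = ϖ a₁ (ast a₃ a₂) + ϖ a₃ (ast a₁ a₂) := by
        have h := hϖcoc a₁ a₃ a₂
        rwa [map_add, LinearMap.add_apply] at h
      have hB231 : ϖ (ast a₂ a₃) a₁ = ϖ a₁ (ast a₂ a₃) := hϖsym _ _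
      have hB132 : ϖ (ast a₁ a₃) a₂ = ϖ a₂ (ast a₁ a₃) := hϖsym _ _
      have hB321 : ϖ (ast a₃ a₂) a₁ = ϖ a₁ (ast a₃ a₂) := hϖsym _ _
      have hB123 : ϖ (ast a₁ a₂) a₃ = ϖ a₃ (ast a₁ a₂) := hϖsym _ _
      have hC : ∀ x y z : B, ω (dia x y) z = ω x (dia y z) - ω x (dia z y) := by
        intro x y z
        rw [hω₃ x y z, map_sub]
      have hC123 := hC b₁ b₂ b₃
      have hC213 := hC b₂ b₁ b₃
      have hC231 := hC b₂ b₃ b₁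
      have hC321 := hC b₃ b₂ b₁
      have hC312 := hC b₃ b₁ b₂
      have hC132 := hC b₁ b₃ b₂
      have hD123 : ω b₁ (dia b₂ b₃) = - ω (dia b₂ b₃) b₁ := hω₁ _ _
      have hD132 : ω b₁ (dia b₃ b₂) = - ω (dia b₃ b₂) b₁ := hω₁ _ _
      have hD231 : ω b₂ (dia b₃ b₁) = - ω (dia b₃ b₁) b₂ := hω₁ _ _
      have hD213 : ω b₂ (dia b₁ b₃) = - ω (dia b₁ b₃) b₂ := hω₁ _ _
      have hD312 : ω b₃ (dia b₁ b₂) = - ω (dia b₁ b₂) b₃ := hω₁ _ _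
      have hD321 : ω b₃ (dia b₂ b₁) = - ω (dia b₂ b₁) b₃ := hω₁ _ _
      linear_combination
        (ϖ (ast a₁ a₂) a₃) * hC123 + (ϖ (ast a₂ a₁) a₃) * hC213
          + (ϖ (ast a₂ a₃) a₁) * hC231 + (ϖ (ast a₃ a₂) a₁) * hC321
          + (ϖ (ast a₃ a₁) a₂) * hC312 + (ϖ (ast a₁ a₃) a₂) * hC132
          + ((ϖ (ast a₁ a₂) a₃ - ϖ (ast a₁ a₃) a₂) / 3)
            * (hD123 - hD132 + hD231 - hD213 + hD312 - hD321
                - hC231 + hC321 - hC312 + hC132 - hC123 + hC213)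
          - (ω b₂ (dia b₃ b₁) - ω b₂ (dia b₁ b₃)) * (hA123 - hB231 - hB132)
          + (ω b₃ (dia b₁ b₂) - ω b₃ (dia b₂ b₁)) * (hA132 - hB321 - hB123)
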